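/- Let 𝒞 be a variety of L-algebras. Let x₁ = (x₁₁,…,x_{1m₁}), x₂ = (x₂₁,…,x_{2m₂}), y = (y₁,…,y_{m₃}) be indeterminates; let w₁₁, w₂₁ be L-terms in m₁ + m₃ indeterminates, w₁₂, w₂₂ L-terms in m₂ + m₃ indeterminates, and W₁, W₂ L-terms in two indeterminates. Suppose the identity W₁(w₁₁(x₁, y), w₁₂(x₂, y)) = W₂(w₂₁(x₁, y), w₂₂(x₂, y)) holds in every algebra of 𝒞. Let A ∈ 𝒞 and B a subalgebra of A. If for some choice of elements x_{ij} ∈ A and y_k ∈ B we have w₁₁(x₁, y) ∈ B and w₂₂(x₂, y) ∈ B, then W₁(w₁₁(x₁, y), w₁₂(x₂, y)) ∈ dom_A^𝒞(B). -/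
import Mathlib


open FirstOrder Language

universe u v w x

theorem identity_univ {L : FirstOrder.Language.{u, v}} (T : L.Theory)
    {m₁ m₂ m₃ : ℕ}
    (w₁₁ w₂₁ : L.Term (Fin m₁ ⊕ Fin m₃)) (w₁₂ w₂₂ : L.Term (Fin m₂ ⊕ Fin m₃))
    (W₁ W₂ : L.Term (Fin 2))
    (hid : ∀ (C : Type (max u v)) [L.Structure C] [T.Model C],
      ∀ (x₁ : Fin m₁ → C) (x₂ : Fin m₂ → C) (y : Fin m₃ → C),
        W₁.realize ![w₁₁.realize (Sum.elim x₁ y), w₁₂.realize (Sum.elim x₂ y)] =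
        W₂.realize ![w₂₁.realize (Sum.elim x₁ y), w₂₂.realize (Sum.elim x₂ y)])
    (C : Type w) [L.Structure C] [T.Model C]
    (x₁ : Fin m₁ → C) (x₂ : Fin m₂ → C) (y : Fin m₃ → C) :
        W₁.realize ![w₁₁.realize (Sum.elim x₁ y), w₁₂.realize (Sum.elim x₂ y)] =
        W₂.realize ![w₂₁.realize (Sum.elim x₁ y), w₂₂.realize (Sum.elim x₂ y)] := by
  classical
  cases isEmpty_or_nonempty C with
  | inl h => exact Subsingleton.elim _ _
  | inr h => ?_
  -- a small elementary substructure containing all the elements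
  let s : Set C := Set.range x₁ ∪ Set.range x₂ ∪ Set.range y
  let S' : (L.sum L.skolem₁).Substructure C := Substructure.closure _ s
  let S : L.ElementarySubstructure C := S'.elementarySkolem₁Reduct
  have hsmall : Small.{max u v} S := by
    rw [Substructure.coeSort_elementarySkolem₁Reduct]
    infer_instance
  have hsub : s ⊆ (S : Set C) := fun z hz => Substructure.subset_closure (L := L.sum L.skolem₁) hz
  let x₁S : Fin m₁ → S := fun i => ⟨x₁ i, hsub (Or.inl (Or.inl ⟨i, rfl⟩))⟩
  let x₂S : Fin m₂ → S := fun i => ⟨x₂ i, hsub (Or.inl (Or.inr ⟨i, rfl⟩))⟩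
  let yS : Fin m₃ → S := fun i => ⟨y i, hsub (Or.inr ⟨i, rfl⟩)⟩
  let e := equivShrink.{max u v} S
  letI : L.Structure (Shrink.{max u v} S) := Equiv.inducedStructure e
  let E : S ≃[L] Shrink.{max u v} S := Equiv.inducedStructureEquiv e
  haveI : T.Model (Shrink.{max u v} S) := StrongHomClass.theory_model E
  have key := hid (Shrink.{max u v} S) (E ∘ x₁S) (E ∘ x₂S) (E ∘ yS)
  have helim : ∀ {m k : ℕ} (t : L.Term (Fin m ⊕ Fin k)) (a : Fin m → S) (b : Fin k → S),
      t.realize (Sum.elim (E ∘ a) (E ∘ b)) = E (t.realize (Sum.elim a b)) := by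
    intro m k t a b
    rw [← Sum.comp_elim, HomClass.realize_term]
  rw [helim, helim, helim, helim] at key
  have hmat : ∀ (a b : S), (![E a, E b] : Fin 2 → Shrink.{max u v} S) = E ∘ ![a, b] := by
    intro a b; funext i; fin_cases i <;> rfl
  rw [hmat, hmat, HomClass.realize_term, HomClass.realize_term] at key
  have keyS := E.injective key
  -- push to C via the substructure embedding
  let emb : S ↪[L] C := (S : L.Substructure C).subtype
  have hpush : ∀ (t₁ : L.Term (Fin m₁ ⊕ Fin m₃)) (t₂ : L.Term (Fin m₂ ⊕ Fin m₃))
      (W : L.Term (Fin 2)),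
      emb (W.realize ![t₁.realize (Sum.elim x₁S yS), t₂.realize (Sum.elim x₂S yS)])
        = W.realize ![t₁.realize (Sum.elim x₁ y), t₂.realize (Sum.elim x₂ y)] := by
    intro t₁ t₂ W
    rw [← HomClass.realize_term (g := emb)]
    congr 1
    funext i
    fin_cases i
    · show emb (t₁.realize (Sum.elim x₁S yS)) = _
      rw [← HomClass.realize_term (g := emb), Sum.comp_elim]
      rfl
    · show emb (t₂.realize (Sum.elim x₂S yS)) = _
      rw [← HomClass.realize_term (g := emb), Sum.comp_elim]
      rfl
  rw [← hpush w₁₁ w₁₂ W₁, ← hpush w₂₁ w₂₂ W₂, keyS]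

open Classical in
/-- Transferability of a set of variables. -/
def Transferable {L : FirstOrder.Language.{u, v}} (T : L.Theory) {A : Type w} [L.Structure A]
    (B : L.Substructure A) {S : Type x} (W : L.Term S) (xs : S → A) (t : Set S) : Prop :=
  ∀ S₁ S₂ : Set S, Disjoint S₁ t → Disjoint S₁ S₂ → Disjoint t S₂ →
    S₁ ∪ t ∪ S₂ = Set.univ →
    ∀ (C : Type (max u v w)) [L.Structure C] [T.Model C], ∀ f g : A →[L] C,
      (∀ b ∈ B, f b = g b) →
      Term.realize (fun s => if s ∈ S₁ ∪ t then f (xs s) else g (xs s)) W =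
      Term.realize (fun s => if s ∈ S₁ then f (xs s) else g (xs s)) W

/-- The dominion of a subalgebra `B` of `A` in the variety of models of `T`. -/
def Dominion {L : FirstOrder.Language.{u, v}} (T : L.Theory) {A : Type w} [L.Structure A]
    (B : L.Substructure A) : Set A :=
  {a : A | ∀ (C : Type (max u v w)) [L.Structure C] [T.Model C], ∀ f g : A →[L] C,
    (∀ b ∈ B, f b = g b) → f a = g a}

/-- Suppose the identity
`W₁(w₁₁(x₁, y), w₁₂(x₂, y)) = W₂(w₂₁(x₁, y), w₂₂(x₂, y))` holds in every algebra of
the variety of models of `T`. Let `A` be an algebra of the variety and `B` a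
subalgebra of `A`. If for some choice of elements `x₁, x₂` of `A` and `y` of `B` we
have `w₁₁(x₁, y) ∈ B` and `w₂₂(x₂, y) ∈ B`, then
`W₁(w₁₁(x₁, y), w₁₂(x₂, y))` lies in the dominion of `B` in `A`. -/
theorem arraystwo_mem_dominion {L : FirstOrder.Language.{u, v}} (T : L.Theory)
    {A : Type w} [L.Structure A] [T.Model A] (B : L.Substructure A)
    (m₁ m₂ m₃ : ℕ)
    (w₁₁ w₂₁ : L.Term (Fin m₁ ⊕ Fin m₃)) (w₁₂ w₂₂ : L.Term (Fin m₂ ⊕ Fin m₃))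
    (W₁ W₂ : L.Term (Fin 2))
    (hid : ∀ (C : Type (max u v)) [L.Structure C] [T.Model C],
      ∀ (x₁ : Fin m₁ → C) (x₂ : Fin m₂ → C) (y : Fin m₃ → C),
        W₁.realize ![w₁₁.realize (Sum.elim x₁ y), w₁₂.realize (Sum.elim x₂ y)] =
        W₂.realize ![w₂₁.realize (Sum.elim x₁ y), w₂₂.realize (Sum.elim x₂ y)])
    (x₁ : Fin m₁ → A) (x₂ : Fin m₂ → A) (y : Fin m₃ → A)
    (hy : ∀ k : Fin m₃, y k ∈ B)
    (h₁₁ : w₁₁.realize (Sum.elim x₁ y) ∈ B)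
    (h₂₂ : w₂₂.realize (Sum.elim x₂ y) ∈ B) :
    W₁.realize ![w₁₁.realize (Sum.elim x₁ y), w₁₂.realize (Sum.elim x₂ y)] ∈
      Dominion T B := by
  intro C _ _ f g hfg
  have hy' : f ∘ y = g ∘ y := funext fun k => hfg _ (hy k)
  have hpush : ∀ (h : A →[L] C) {m k : ℕ} (t : L.Term (Fin m ⊕ Fin k))
      (a : Fin m → A) (b : Fin k → A),
      h (t.realize (Sum.elim a b)) = t.realize (Sum.elim (h ∘ a) (h ∘ b)) := by
    intro h m k t a b
    rw [← Sum.comp_elim, HomClass.realize_term]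
  have hpush2 : ∀ (h : A →[L] C) (a b : A),
      h (W₁.realize ![a, b]) = W₁.realize ![h a, h b] ∧
      h (W₂.realize ![a, b]) = W₂.realize ![h a, h b] := by
    intro h a b
    constructor <;>
    · rw [← HomClass.realize_term (g := h)]
      congr 1
      funext i
      fin_cases i <;> rfl
  calc f (W₁.realize ![w₁₁.realize (Sum.elim x₁ y), w₁₂.realize (Sum.elim x₂ y)])
      = W₁.realize ![f (w₁₁.realize (Sum.elim x₁ y)), f (w₁₂.realize (Sum.elim x₂ y))] :=
        (hpush2 f _ _).1
    _ = W₁.realize ![w₁₁.realize (Sum.elim (g ∘ x₁) (g ∘ y)),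
          w₁₂.realize (Sum.elim (f ∘ x₂) (g ∘ y))] := by
        rw [hfg _ h₁₁, hpush g w₁₁, hpush f w₁₂, hy']
    _ = W₂.realize ![w₂₁.realize (Sum.elim (g ∘ x₁) (g ∘ y)),
          w₂₂.realize (Sum.elim (f ∘ x₂) (g ∘ y))] :=
        identity_univ T w₁₁ w₂₁ w₁₂ w₂₂ W₁ W₂ hid C _ _ _
    _ = W₂.realize ![w₂₁.realize (Sum.elim (g ∘ x₁) (g ∘ y)),
          w₂₂.realize (Sum.elim (g ∘ x₂) (g ∘ y))] := by
        have h2 : w₂₂.realize (Sum.elim (f ∘ x₂) ((g : A → C) ∘ y)) =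
            w₂₂.realize (Sum.elim (g ∘ x₂) ((g : A → C) ∘ y)) := by
          rw [← hy', ← hpush f w₂₂, hfg _ h₂₂, hpush g w₂₂, hy']
        rw [h2]
    _ = W₁.realize ![w₁₁.realize (Sum.elim (g ∘ x₁) (g ∘ y)),
          w₁₂.realize (Sum.elim (g ∘ x₂) (g ∘ y))] :=
        (identity_univ T w₁₁ w₂₁ w₁₂ w₂₂ W₁ W₂ hid C _ _ _).symm
    _ = g (W₁.realize ![w₁₁.realize (Sum.elim x₁ y), w₁₂.realize (Sum.elim x₂ y)]) := by
        rw [(hpush2 g _ _).1, hpush g w₁₁, hpush g w₁₂]
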